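/- Let X be a random real symmetric m×m matrix and R ≥ 0 a fixed scalar such that E[X] = 0 and E[X^q] ⪯ (q/2)! · R^q · I_m for every even natural number q. Let ε be a Rademacher random variable (taking values ±1 with probability 1/2 each) independent of X. Then for every θ ∈ ℝ, E[exp(2εθX)] ⪯ exp(2θ²R²) · I_m, where exp applied to a matrix denotes the matrix exponential. -/

import Mathlib

open MeasureTheory
open scoped ENNReal

/-- The matrix exponential of a real square matrix, defined entrywise by its power
series `exp(A) = ∑_q A^q / q!`. -/
noncomputable def matExp {m : ℕ} (A : Matrix (Fin m) (Fin m) ℝ) :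
    Matrix (Fin m) (Fin m) ℝ :=
  Matrix.of fun a b => ∑' q : ℕ, (1 / (q.factorial : ℝ)) * ((A ^ q) a b)

section Aux

open Matrix

variable {m : ℕ} {Ω' : Type*} [MeasurableSpace Ω']

lemma summable_matExpSeries (A : Matrix (Fin m) (Fin m) ℝ) :
    Summable fun q : ℕ => ((q.factorial : ℝ)⁻¹) • A ^ q := by
  letI : SeminormedRing (Matrix (Fin m) (Fin m) ℝ) := Matrix.linftyOpSemiNormedRing
  letI : NormedRing (Matrix (Fin m) (Fin m) ℝ) := Matrix.linftyOpNormedRing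
  letI : NormedAlgebra ℝ (Matrix (Fin m) (Fin m) ℝ) := Matrix.linftyOpNormedAlgebra
  exact NormedSpace.expSeries_summable' (𝕂 := ℝ) A

lemma summable_matExp_entry (A : Matrix (Fin m) (Fin m) ℝ) (a b : Fin m) :
    Summable fun q : ℕ => (1 / (q.factorial : ℝ)) * ((A ^ q) a b) := by
  have h2 : Summable fun q : ℕ => (((q.factorial : ℝ)⁻¹) • A ^ q) a b :=
    (Pi.summable.mp ((Pi.summable.mp (summable_matExpSeries A)) a)) b
  simpa [one_div, Matrix.smul_apply, smul_eq_mul] using h2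

lemma matExp_eq_exp (A : Matrix (Fin m) (Fin m) ℝ) :
    matExp A = NormedSpace.exp A := by
  have h := summable_matExpSeries A
  ext a b
  rw [NormedSpace.exp_eq_tsum ℝ]
  have h1 : (∑' q : ℕ, ((q.factorial : ℝ)⁻¹) • A ^ q) a b
      = ∑' q : ℕ, (((q.factorial : ℝ)⁻¹) • A ^ q) a b := by
    exact (congrArg (fun g => g b) (tsum_apply (x := a) h)).trans (tsum_apply (x := b) (Pi.summable.mp h a))
  simp only [matExp, Matrix.of_apply, h1, Matrix.smul_apply, smul_eq_mul, one_div]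

lemma isHermitian_smul_real {A : Matrix (Fin m) (Fin m) ℝ} (h : A.IsHermitian) (c : ℝ) :
    (c • A).IsHermitian := by
  rw [Matrix.IsHermitian, Matrix.conjTranspose_smul, star_trivial, h.eq]

lemma matExp_isHermitian {A : Matrix (Fin m) (Fin m) ℝ} (hA : A.IsHermitian) :
    (matExp A).IsHermitian := by
  ext a b
  simp only [Matrix.conjTranspose_apply, matExp, Matrix.of_apply, star_trivial]
  congr 1 with q
  congr 1
  conv_rhs => rw [← (hA.pow q).eq]
  simp [Matrix.conjTranspose_apply]

lemma quad_even_pow_nonneg {A : Matrix (Fin m) (Fin m) ℝ} (hA : A.IsHermitian) (k : ℕ)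
    (v : Fin m → ℝ) : 0 ≤ v ⬝ᵥ (A ^ (2 * k)) *ᵥ v := by
  have h : A ^ (2 * k) = (A ^ k)ᴴ * (A ^ k) := by
    rw [(hA.pow k).eq, two_mul, pow_add]
  have := (Matrix.posSemidef_conjTranspose_mul_self (A ^ k)).dotProduct_mulVec_nonneg v
  rw [h]
  simpa using this

lemma quad_matExp_nonneg {A : Matrix (Fin m) (Fin m) ℝ} (hA : A.IsHermitian)
    (v : Fin m → ℝ) : 0 ≤ v ⬝ᵥ (matExp A) *ᵥ v := by
  have hA2 : ((2⁻¹ : ℝ) • A).IsHermitian := isHermitian_smul_real hA _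
  have h2 : matExp A = NormedSpace.exp ((2⁻¹ : ℝ) • A) * NormedSpace.exp ((2⁻¹ : ℝ) • A) := by
    rw [matExp_eq_exp, ← Matrix.exp_add_of_commute _ _ (Commute.refl _)]
    congr 1
    rw [← add_smul]; norm_num
  have hh : (NormedSpace.exp ((2⁻¹ : ℝ) • A)).IsHermitian := by
    have := matExp_isHermitian hA2
    rwa [matExp_eq_exp] at this
  rw [h2]
  have := (Matrix.posSemidef_conjTranspose_mul_self (NormedSpace.exp ((2⁻¹ : ℝ) • A))).dotProduct_mulVec_nonneg v
  rw [hh.eq] at this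
  simpa using this

lemma dot_expand (M : Matrix (Fin m) (Fin m) ℝ) (v : Fin m → ℝ) :
    v ⬝ᵥ M *ᵥ v = ∑ a, ∑ b, v a * (M a b * v b) := by
  simp [dotProduct, Matrix.mulVec, Finset.mul_sum]

lemma summable_quad (A : Matrix (Fin m) (Fin m) ℝ) (c : ℝ) (v : Fin m → ℝ) :
    Summable fun q : ℕ => (1 / (q.factorial : ℝ)) * c ^ q * (v ⬝ᵥ (A ^ q) *ᵥ v) := by
  have key : ∀ q : ℕ, (1 / (q.factorial : ℝ)) * c ^ q * (v ⬝ᵥ (A ^ q) *ᵥ v)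
      = ∑ a, ∑ b, v a * ((1 / (q.factorial : ℝ)) * (((c • A) ^ q) a b) * v b) := by
    intro q
    rw [dot_expand, Finset.mul_sum]
    refine Finset.sum_congr rfl fun a _ => ?_
    rw [Finset.mul_sum]
    refine Finset.sum_congr rfl fun b _ => ?_
    simp [smul_pow, Matrix.smul_apply, smul_eq_mul]
    ring
  rw [funext key]
  apply summable_sum
  intro a _
  apply summable_sum
  intro b _
  exact (((summable_matExp_entry (c • A) a b).mul_left (v a)).mul_right (v b)).congr
    (by intro q; ring)

lemma quad_matExp_tsum (A : Matrix (Fin m) (Fin m) ℝ) (c : ℝ) (v : Fin m → ℝ) :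
    v ⬝ᵥ (matExp (c • A)) *ᵥ v
      = ∑' q : ℕ, (1 / (q.factorial : ℝ)) * c ^ q * (v ⬝ᵥ (A ^ q) *ᵥ v) := by
  rw [dot_expand]
  have h1 : ∀ a b : Fin m, v a * ((matExp (c • A)) a b * v b)
      = ∑' q : ℕ, v a * ((1 / (q.factorial : ℝ)) * (((c • A) ^ q) a b) * v b) := by
    intro a b
    simp only [matExp, Matrix.of_apply]
    rw [← tsum_mul_right, ← tsum_mul_left]
  have hsum : ∀ a b : Fin m,
      Summable fun q : ℕ => v a * ((1 / (q.factorial : ℝ)) * (((c • A) ^ q) a b) * v b) := by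
    intro a b
    exact (((summable_matExp_entry (c • A) a b).mul_right (v b)).mul_left (v a)).congr
      (by intro q; ring)
  calc ∑ a, ∑ b, v a * ((matExp (c • A)) a b * v b)
      = ∑ a, ∑ b, ∑' q : ℕ, v a * ((1 / (q.factorial : ℝ)) * (((c • A) ^ q) a b) * v b) := by
        exact Finset.sum_congr rfl fun a _ => Finset.sum_congr rfl fun b _ => h1 a b
    _ = ∑ a, ∑' q : ℕ, ∑ b, v a * ((1 / (q.factorial : ℝ)) * (((c • A) ^ q) a b) * v b) := by
        exact Finset.sum_congr rfl fun a _ => (Summable.tsum_finsetSum fun b _ => hsum a b).symm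
    _ = ∑' q : ℕ, ∑ a, ∑ b, v a * ((1 / (q.factorial : ℝ)) * (((c • A) ^ q) a b) * v b) := by
        refine (Summable.tsum_finsetSum fun a _ => ?_).symm
        exact summable_sum fun b _ => hsum a b
    _ = ∑' q : ℕ, (1 / (q.factorial : ℝ)) * c ^ q * (v ⬝ᵥ (A ^ q) *ᵥ v) := by
        congr 1 with q
        rw [dot_expand, Finset.mul_sum]
        refine Finset.sum_congr rfl fun a _ => ?_
        rw [Finset.mul_sum]
        refine Finset.sum_congr rfl fun b _ => ?_
        simp [smul_pow, Matrix.smul_apply, smul_eq_mul]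
        ring

lemma measurable_pow_entry (Y : Ω' → Matrix (Fin m) (Fin m) ℝ)
    (hY : ∀ a b, Measurable fun ω => Y ω a b) (q : ℕ) (a b : Fin m) :
    Measurable fun ω => ((Y ω) ^ q) a b := by
  induction q generalizing a b with
  | zero =>
      simp only [pow_zero, Matrix.one_apply]
      exact measurable_const.ite (MeasurableSet.const _) measurable_const
  | succ n ih =>
      simp only [pow_succ, Matrix.mul_apply]
      exact Finset.measurable_sum _ fun c _ => (ih a c).mul (hY c b)

lemma measurable_quad_pow (Y : Ω' → Matrix (Fin m) (Fin m) ℝ)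
    (hY : ∀ a b, Measurable fun ω => Y ω a b) (q : ℕ) (v : Fin m → ℝ) :
    Measurable fun ω => v ⬝ᵥ ((Y ω) ^ q) *ᵥ v := by
  simp only [dot_expand]
  exact Finset.measurable_sum _ fun a _ => Finset.measurable_sum _ fun b _ =>
    (((measurable_pow_entry Y hY q a b).mul measurable_const).const_mul (v a))

lemma measurable_quad_matExp (Y : Ω' → Matrix (Fin m) (Fin m) ℝ)
    (hY : ∀ a b, Measurable fun ω => Y ω a b) (c : ℝ) (v : Fin m → ℝ) :
    Measurable fun ω => v ⬝ᵥ (matExp (c • Y ω)) *ᵥ v := by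
  have h : ∀ ω, v ⬝ᵥ (matExp (c • Y ω)) *ᵥ v
      = ∑' q : ℕ, (1 / (q.factorial : ℝ)) * c ^ q * (v ⬝ᵥ ((Y ω) ^ q) *ᵥ v) := fun ω =>
    quad_matExp_tsum (Y ω) c v
  simp only [h]
  apply measurable_of_tendsto_metrizable
    (f := fun n ω => ∑ q ∈ Finset.range n,
      (1 / (q.factorial : ℝ)) * c ^ q * (v ⬝ᵥ ((Y ω) ^ q) *ᵥ v))
  · intro n
    exact Finset.measurable_sum _ fun q _ => (measurable_quad_pow Y hY q v).const_mul _
  · rw [tendsto_pi_nhds]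
    intro ω
    exact (summable_quad (Y ω) c v).hasSum.tendsto_sum_nat

lemma integrable_quad {μ : Measure Ω'} (Y : Ω' → Matrix (Fin m) (Fin m) ℝ)
    (hint : ∀ a b, Integrable (fun ω => Y ω a b) μ) (v : Fin m → ℝ) :
    Integrable (fun ω => v ⬝ᵥ (Y ω) *ᵥ v) μ := by
  simp only [dot_expand]
  exact integrable_finset_sum _ fun a _ => integrable_finset_sum _ fun b _ =>
    (((hint a b).mul_const (v b)).const_mul (v a))

lemma integral_quad {μ : Measure Ω'} (Y : Ω' → Matrix (Fin m) (Fin m) ℝ)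
    (hint : ∀ a b, Integrable (fun ω => Y ω a b) μ) (v : Fin m → ℝ) :
    v ⬝ᵥ ((Matrix.of fun a b => ∫ ω, Y ω a b ∂μ) *ᵥ v) = ∫ ω, v ⬝ᵥ (Y ω) *ᵥ v ∂μ := by
  have h : ∀ ω, v ⬝ᵥ (Y ω) *ᵥ v = ∑ a, ∑ b, v a * (Y ω a b * v b) := fun ω => dot_expand _ v
  have hL : v ⬝ᵥ ((Matrix.of fun a b => ∫ ω, Y ω a b ∂μ) *ᵥ v)
      = ∑ a, ∑ b, v a * ((∫ ω, Y ω a b ∂μ) * v b) := by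
    simp [dotProduct, Matrix.mulVec, Finset.mul_sum]
  rw [hL]
  have hR : ∫ ω, v ⬝ᵥ (Y ω) *ᵥ v ∂μ = ∫ ω, ∑ a, ∑ b, v a * (Y ω a b * v b) ∂μ :=
    integral_congr_ae (Filter.Eventually.of_forall h)
  rw [hR, integral_finset_sum _ fun a _ => integrable_finset_sum _ fun b _ =>
    (((hint a b).mul_const (v b)).const_mul (v a))]
  refine Finset.sum_congr rfl fun a _ => ?_
  rw [integral_finset_sum _ fun b _ => (((hint a b).mul_const (v b)).const_mul (v a))]
  refine Finset.sum_congr rfl fun b _ => ?_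
  rw [integral_const_mul, integral_mul_const]

lemma fact_bound (k : ℕ) : 2 ^ k * (k.factorial) ^ 2 ≤ (2 * k).factorial := by
  induction k with
  | zero => simp
  | succ n ih =>
      have h2 : 2 * (n + 1) = 2 * n + 1 + 1 := by ring
      calc 2 ^ (n + 1) * ((n + 1).factorial) ^ 2
          = 2 * (n + 1) ^ 2 * (2 ^ n * (n.factorial) ^ 2) := by rw [Nat.factorial_succ]; ring
        _ ≤ 2 * (n + 1) ^ 2 * (2 * n).factorial := Nat.mul_le_mul_left _ ih
        _ ≤ (2 * (n + 1)).factorial := by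
            rw [h2, Nat.factorial_succ, Nat.factorial_succ, ← mul_assoc]
            exact Nat.mul_le_mul_right _ (by nlinarith)

lemma term_bound {θ R : ℝ} (k : ℕ) :
    (1 / ((2 * k).factorial : ℝ)) * (2 * θ) ^ (2 * k) * ((k.factorial : ℝ) * R ^ (2 * k))
      ≤ (2 * θ ^ 2 * R ^ 2) ^ k / (k.factorial : ℝ) := by
  have hfac : (0 : ℝ) < ((2 * k).factorial : ℝ) := by exact_mod_cast (2 * k).factorial_pos
  have hfk : (0 : ℝ) < (k.factorial : ℝ) := by exact_mod_cast k.factorial_pos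
  have hkey : (2 : ℝ) ^ k * ((k.factorial : ℝ)) ^ 2 ≤ ((2 * k).factorial : ℝ) := by
    exact_mod_cast fact_bound k
  have hθ : (0:ℝ) ≤ (θ ^ 2) ^ k := by positivity
  have hRk : (0:ℝ) ≤ (R ^ 2) ^ k := by positivity
  have h1 : (2 * θ) ^ (2 * k) = 4 ^ k * (θ ^ 2) ^ k := by
    rw [mul_pow, pow_mul, pow_mul]; norm_num
  have h2 : R ^ (2 * k) = (R ^ 2) ^ k := by rw [pow_mul]
  have hL : (1 / ((2 * k).factorial : ℝ)) * (2 * θ) ^ (2 * k) * ((k.factorial : ℝ) * R ^ (2 * k))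
      = (4 ^ k * (θ ^ 2) ^ k * (k.factorial : ℝ) * (R ^ 2) ^ k) / ((2 * k).factorial : ℝ) := by
    rw [h1, h2]; ring
  have hRr : (2 * θ ^ 2 * R ^ 2) ^ k / (k.factorial : ℝ)
      = (2 ^ k * (θ ^ 2) ^ k * (R ^ 2) ^ k) / (k.factorial : ℝ) := by
    rw [mul_pow, mul_pow]
  rw [hL, hRr, div_le_div_iff₀ hfac hfk]
  have hkey2 : (4:ℝ) ^ k * ((k.factorial : ℝ)) ^ 2 ≤ 2 ^ k * ((2 * k).factorial : ℝ) := by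
    have h4 : (4:ℝ) ^ k = 2 ^ k * 2 ^ k := by rw [← mul_pow]; norm_num
    rw [h4, mul_assoc]
    exact mul_le_mul_of_nonneg_left hkey (by positivity)
  nlinarith [mul_le_mul_of_nonneg_left hkey2 (mul_nonneg hθ hRk)]

lemma exp_tsum (x : ℝ) : ∑' k : ℕ, x ^ k / (k.factorial : ℝ) = Real.exp x := by
  rw [Real.exp_eq_exp_ℝ, NormedSpace.exp_eq_tsum_div]

end Aux

open Matrix in
/-- Lemma 8 (Symmetrized sub-Gaussian matrix MGF): if the random symmetric matrix `X`
has mean zero and even moments `E[X^q] ⪯ (q/2)! R^q I`, and `ε` is an independent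
Rademacher sign, then `E[exp(2εθX)] ⪯ exp(2θ²R²) I` for every `θ ∈ ℝ`. -/
theorem stmt_15 {Ω : Type*} [MeasurableSpace Ω] (μ : Measure Ω) [IsProbabilityMeasure μ]
    (m : ℕ) (X : Ω → Matrix (Fin m) (Fin m) ℝ) (R : ℝ) (hR : 0 ≤ R)
    (hXsym : ∀ ω, (X ω).IsHermitian)
    (hXmeas : ∀ a b : Fin m, Measurable fun ω => X ω a b)
    (hXint : ∀ q : ℕ, ∀ a b : Fin m, Integrable (fun ω => ((X ω) ^ q) a b) μ)
    (hmean : ∀ a b : Fin m, ∫ ω, X ω a b ∂μ = 0)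
    (hmom : ∀ q : ℕ, Even q → Matrix.PosSemidef
      ((((q / 2).factorial : ℝ) * R ^ q) • (1 : Matrix (Fin m) (Fin m) ℝ) -
        Matrix.of fun a b => ∫ ω, ((X ω) ^ q) a b ∂μ))
    (ε : Ω → ℝ) (hεmeas : Measurable ε)
    (hεval : ∀ᵐ ω ∂μ, ε ω = 1 ∨ ε ω = -1)
    (hεhalf : μ {ω | ε ω = 1} = 1 / 2)
    (hindep : ProbabilityTheory.IndepFun ε (fun ω (p : Fin m × Fin m) => X ω p.1 p.2) μ)
    (hexpint : ∀ θ : ℝ, ∀ a b : Fin m,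
      Integrable (fun ω => (matExp ((2 * ε ω * θ) • X ω)) a b) μ) :
    ∀ θ : ℝ, Matrix.PosSemidef
      (Real.exp (2 * θ ^ 2 * R ^ 2) • (1 : Matrix (Fin m) (Fin m) ℝ) -
        Matrix.of fun a b => ∫ ω, (matExp ((2 * ε ω * θ) • X ω)) a b ∂μ) := by
  intro θ
  set c : ℝ := 2 * θ with hc
  set e : ℝ := Real.exp (2 * θ ^ 2 * R ^ 2) with he
  set M : Matrix (Fin m) (Fin m) ℝ :=
    Matrix.of fun a b => ∫ ω, (matExp ((2 * ε ω * θ) • X ω)) a b ∂μ with hM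
  -- Hermitian-ness of each matExp
  have hHerm : ∀ ω, (matExp ((2 * ε ω * θ) • X ω)).IsHermitian := fun ω =>
    matExp_isHermitian (isHermitian_smul_real (hXsym ω) _)
  have hsymEntry : ∀ (ω : Ω) (a b : Fin m),
      matExp ((2 * ε ω * θ) • X ω) b a = matExp ((2 * ε ω * θ) • X ω) a b := by
    intro ω a b
    conv_lhs => rw [← (hHerm ω).eq]
    simp [Matrix.conjTranspose_apply]
  have hMh : M.IsHermitian := by
    ext a b
    simp only [Matrix.conjTranspose_apply, hM, Matrix.of_apply, star_trivial]
    exact integral_congr_ae (Filter.Eventually.of_forall fun ω => hsymEntry ω a b)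
  refine Matrix.PosSemidef.of_dotProduct_mulVec_nonneg (Matrix.IsHermitian.sub (isHermitian_smul_real Matrix.isHermitian_one e) hMh)
    fun v => ?_
  -- reduce to scalar inequality
  have hvv : (0:ℝ) ≤ v ⬝ᵥ v := Finset.sum_nonneg fun i _ => mul_self_nonneg (v i)
  have hgoal : v ⬝ᵥ M *ᵥ v ≤ e * (v ⬝ᵥ v) → 0 ≤ star v ⬝ᵥ (e • 1 - M) *ᵥ v := by
    intro h
    rw [star_trivial, Matrix.sub_mulVec, dotProduct_sub, Matrix.smul_mulVec,
      Matrix.one_mulVec, dotProduct_smul, smul_eq_mul]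
    linarith
  apply hgoal
  -- the main integral identity
  set F : Ω → ℝ := fun ω => v ⬝ᵥ (matExp ((2 * ε ω * θ) • X ω)) *ᵥ v with hF
  have hMv : v ⬝ᵥ M *ᵥ v = ∫ ω, F ω ∂μ :=
    integral_quad _ (fun a b => hexpint θ a b) v
  rw [hMv]
  set fp : Ω → ℝ := fun ω => v ⬝ᵥ (matExp (c • X ω)) *ᵥ v with hfp
  set fm : Ω → ℝ := fun ω => v ⬝ᵥ (matExp ((-c) • X ω)) *ᵥ v with hfm
  have hfp0 : ∀ ω, 0 ≤ fp ω := fun ω =>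
    quad_matExp_nonneg (isHermitian_smul_real (hXsym ω) c) v
  have hfm0 : ∀ ω, 0 ≤ fm ω := fun ω =>
    quad_matExp_nonneg (isHermitian_smul_real (hXsym ω) (-c)) v
  have hfpmeas : Measurable fp := measurable_quad_matExp X hXmeas c v
  have hfmmeas : Measurable fm := measurable_quad_matExp X hXmeas (-c) v
  set Aset : Set Ω := {ω | ε ω = 1} with hAset
  have hAmeas : MeasurableSet Aset := hεmeas (measurableSet_singleton 1)
  have hFae : ∀ᵐ ω ∂μ, F ω = Aset.indicator fp ω + Asetᶜ.indicator fm ω := by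
    filter_upwards [hεval] with ω hω
    rcases hω with h1 | h1
    · have hmem : ω ∈ Aset := h1
      rw [Set.indicator_of_mem hmem fp, Set.indicator_of_notMem (by simpa using hmem) fm,
        add_zero]
      have h2 : 2 * ε ω * θ = c := by rw [h1, hc]; ring
      show v ⬝ᵥ (matExp ((2 * ε ω * θ) • X ω)) *ᵥ v = v ⬝ᵥ (matExp (c • X ω)) *ᵥ v
      rw [h2]
    · have hmem : ω ∉ Aset := by simp only [hAset, Set.mem_setOf_eq, h1]; norm_num
      rw [Set.indicator_of_notMem hmem fp, Set.indicator_of_mem (by simpa using hmem) fm,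
        zero_add]
      have h2 : 2 * ε ω * θ = -c := by rw [h1, hc]; ring
      show v ⬝ᵥ (matExp ((2 * ε ω * θ) • X ω)) *ᵥ v = v ⬝ᵥ (matExp ((-c) • X ω)) *ᵥ v
      rw [h2]
  have hF0 : 0 ≤ᵐ[μ] F := by
    filter_upwards [hFae] with ω hω
    rw [hω]
    exact add_nonneg (Set.indicator_nonneg (fun x _ => hfp0 x) ω)
      (Set.indicator_nonneg (fun x _ => hfm0 x) ω)
  have hFint : Integrable F μ := integrable_quad _ (fun a b => hexpint θ a b) v
  -- pass to lintegral
  rw [integral_eq_lintegral_of_nonneg_ae hF0 hFint.aestronglyMeasurable]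
  refine ENNReal.toReal_le_of_le_ofReal (by positivity) ?_
  -- Step 1: split the lintegral
  have hsplit : ∫⁻ ω, ENNReal.ofReal (F ω) ∂μ
      = (∫⁻ ω, Aset.indicator (fun ω => ENNReal.ofReal (fp ω)) ω ∂μ)
        + ∫⁻ ω, Asetᶜ.indicator (fun ω => ENNReal.ofReal (fm ω)) ω ∂μ := by
    rw [← lintegral_add_left ((hfpmeas.ennreal_ofReal).indicator hAmeas)]
    refine lintegral_congr_ae ?_
    filter_upwards [hFae] with ω hω
    by_cases hmem : ω ∈ Aset
    · rw [hω, Set.indicator_of_mem hmem fp, Set.indicator_of_notMem (by simpa using hmem) fm,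
        add_zero, Set.indicator_of_mem hmem, Set.indicator_of_notMem (by simpa using hmem),
        add_zero]
    · rw [hω, Set.indicator_of_notMem hmem fp, Set.indicator_of_mem (by simpa using hmem) fm,
        zero_add, Set.indicator_of_notMem hmem, Set.indicator_of_mem (by simpa using hmem),
        zero_add]
  -- Step 2: independence computation for each piece
  set Xf : Ω → ((Fin m × Fin m) → ℝ) := fun ω p => X ω p.1 p.2 with hXf
  have hXfmeas : Measurable Xf := measurable_pi_lambda _ fun p => hXmeas p.1 p.2
  set g2p : ((Fin m × Fin m) → ℝ) → ℝ≥0∞ := fun Y =>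
    ENNReal.ofReal (v ⬝ᵥ (matExp (c • (Matrix.of fun a b => Y (a, b)))) *ᵥ v) with hg2p
  set g2m : ((Fin m × Fin m) → ℝ) → ℝ≥0∞ := fun Y =>
    ENNReal.ofReal (v ⬝ᵥ (matExp ((-c) • (Matrix.of fun a b => Y (a, b)))) *ᵥ v) with hg2m
  have hg2pmeas : Measurable g2p :=
    (measurable_quad_matExp (fun (Y : (Fin m × Fin m) → ℝ) => Matrix.of fun a b => Y (a, b))
      (fun a b => measurable_pi_apply (a, b)) c v).ennreal_ofReal
  have hg2mmeas : Measurable g2m :=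
    (measurable_quad_matExp (fun (Y : (Fin m × Fin m) → ℝ) => Matrix.of fun a b => Y (a, b))
      (fun a b => measurable_pi_apply (a, b)) (-c) v).ennreal_ofReal
  set g1p : ℝ → ℝ≥0∞ := ({1} : Set ℝ).indicator 1 with hg1p
  set g1m : ℝ → ℝ≥0∞ := (({1} : Set ℝ)ᶜ).indicator 1 with hg1m
  have hg1pmeas : Measurable g1p := measurable_one.indicator (measurableSet_singleton 1)
  have hg1mmeas : Measurable g1m := measurable_one.indicator (measurableSet_singleton 1).compl
  have hind1 : ∫⁻ ω, Aset.indicator (fun ω => ENNReal.ofReal (fp ω)) ω ∂μ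
      = μ Aset * ∫⁻ ω, ENNReal.ofReal (fp ω) ∂μ := by
    have heq : ∀ ω, Aset.indicator (fun ω => ENNReal.ofReal (fp ω)) ω
        = (g1p ∘ ε) ω * (g2p ∘ Xf) ω := by
      intro ω
      show _ = g1p (ε ω) * g2p (Xf ω)
      have hg2 : g2p (Xf ω) = ENNReal.ofReal (fp ω) := rfl
      by_cases hmem : ω ∈ Aset
      · rw [Set.indicator_of_mem hmem, hg1p, Set.indicator_of_mem (by exact hmem), hg2,
          Pi.one_apply, one_mul]
      · rw [Set.indicator_of_notMem hmem, hg1p, Set.indicator_of_notMem (by exact hmem),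
          zero_mul]
    simp only [heq]
    rw [ProbabilityTheory.lintegral_mul_eq_lintegral_mul_lintegral_of_indepFun''
      (hg1pmeas.comp hεmeas).aemeasurable (hg2pmeas.comp hXfmeas).aemeasurable
      (hindep.comp hg1pmeas hg2pmeas)]
    congr 1
    have h1 : (g1p ∘ ε) = Aset.indicator (fun _ => (1 : ℝ≥0∞)) := by
      funext ω
      by_cases hmem : ω ∈ Aset
      · show g1p (ε ω) = _
        rw [hg1p, Set.indicator_of_mem (by exact hmem), Set.indicator_of_mem hmem, Pi.one_apply]
      · show g1p (ε ω) = _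
        rw [hg1p, Set.indicator_of_notMem (by exact hmem), Set.indicator_of_notMem hmem]
    exact h1 ▸ lintegral_indicator_one hAmeas
  have hμc : μ Asetᶜ = 1 / 2 := by
    rw [measure_compl hAmeas (measure_ne_top μ _), measure_univ, hεhalf, one_div,
      ENNReal.one_sub_inv_two]
  have hind2 : ∫⁻ ω, Asetᶜ.indicator (fun ω => ENNReal.ofReal (fm ω)) ω ∂μ
      = μ Asetᶜ * ∫⁻ ω, ENNReal.ofReal (fm ω) ∂μ := by
    have heq : ∀ ω, Asetᶜ.indicator (fun ω => ENNReal.ofReal (fm ω)) ω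
        = (g1m ∘ ε) ω * (g2m ∘ Xf) ω := by
      intro ω
      show _ = g1m (ε ω) * g2m (Xf ω)
      have hg2 : g2m (Xf ω) = ENNReal.ofReal (fm ω) := rfl
      by_cases hmem : ω ∈ Asetᶜ
      · rw [Set.indicator_of_mem hmem, hg1m, Set.indicator_of_mem (by exact hmem), hg2,
          Pi.one_apply, one_mul]
      · rw [Set.indicator_of_notMem hmem, hg1m, Set.indicator_of_notMem (by exact hmem),
          zero_mul]
    simp only [heq]
    rw [ProbabilityTheory.lintegral_mul_eq_lintegral_mul_lintegral_of_indepFun''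
      (hg1mmeas.comp hεmeas).aemeasurable (hg2mmeas.comp hXfmeas).aemeasurable
      (hindep.comp hg1mmeas hg2mmeas)]
    congr 1
    have h1 : (g1m ∘ ε) = Asetᶜ.indicator (fun _ => (1 : ℝ≥0∞)) := by
      funext ω
      by_cases hmem : ω ∈ Asetᶜ
      · show g1m (ε ω) = _
        rw [hg1m, Set.indicator_of_mem (by exact hmem), Set.indicator_of_mem hmem, Pi.one_apply]
      · show g1m (ε ω) = _
        rw [hg1m, Set.indicator_of_notMem (by exact hmem), Set.indicator_of_notMem hmem]
    exact h1 ▸ lintegral_indicator_one hAmeas.compl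
  -- combine halves
  have hhalf : ∫⁻ ω, ENNReal.ofReal (F ω) ∂μ
      = 2⁻¹ * ((∫⁻ ω, ENNReal.ofReal (fp ω) ∂μ) + ∫⁻ ω, ENNReal.ofReal (fm ω) ∂μ) := by
    rw [hsplit, hind1, hind2, hεhalf, hμc, mul_add, one_div]
  -- series pieces
  set t : ℕ → Ω → ℝ := fun q ω => v ⬝ᵥ ((X ω) ^ q) *ᵥ v with ht
  set d : ℕ → ℝ := fun q => (1 / (q.factorial : ℝ)) * (c ^ q + (-c) ^ q) with hd
  have hdodd : ∀ q, Odd q → d q = 0 := by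
    intro q hq
    rw [hd]
    simp only [hq.neg_pow]
    ring
  have hdeven : ∀ q, Even q → 0 ≤ d q := by
    intro q hq
    simp only [hd, hq.neg_pow]
    have h0 : (0:ℝ) ≤ c ^ q := hq.pow_nonneg c
    have h1 : (0:ℝ) ≤ 1 / (q.factorial : ℝ) := by positivity
    nlinarith
  have hteven : ∀ q, Even q → ∀ ω, 0 ≤ t q ω := by
    intro q hq ω
    obtain ⟨k, hk⟩ := hq
    have hq2 : q = 2 * k := by omega
    rw [ht, hq2]
    exact quad_even_pow_nonneg (hXsym ω) k v
  have hterm_nonneg : ∀ q ω, 0 ≤ d q * t q ω := by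
    intro q ω
    rcases Nat.even_or_odd q with hq | hq
    · exact mul_nonneg (hdeven q hq) (hteven q hq ω)
    · rw [hdodd q hq, zero_mul]
  have hsummable : ∀ ω, Summable fun q => d q * t q ω := by
    intro ω
    refine ((summable_quad (X ω) c v).add (summable_quad (X ω) (-c) v)).congr fun q => ?_
    simp only [hd, ht]
    ring
  have hsum_eq : ∀ ω, fp ω + fm ω = ∑' q, d q * t q ω := by
    intro ω
    show (v ⬝ᵥ (matExp (c • X ω)) *ᵥ v) + (v ⬝ᵥ (matExp ((-c) • X ω)) *ᵥ v) = _
    rw [quad_matExp_tsum, quad_matExp_tsum,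
      ← Summable.tsum_add (summable_quad (X ω) c v) (summable_quad (X ω) (-c) v)]
    refine tsum_congr fun q => ?_
    simp only [hd, ht]
    ring
  have hLsum : (∫⁻ ω, ENNReal.ofReal (fp ω) ∂μ) + ∫⁻ ω, ENNReal.ofReal (fm ω) ∂μ
      = ∫⁻ ω, ∑' q, ENNReal.ofReal (d q * t q ω) ∂μ := by
    rw [← lintegral_add_left hfpmeas.ennreal_ofReal]
    refine lintegral_congr fun ω => ?_
    rw [← ENNReal.ofReal_add (hfp0 ω) (hfm0 ω), hsum_eq ω,
      ENNReal.ofReal_tsum_of_nonneg (fun q => hterm_nonneg q ω) (hsummable ω)]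
  have hswap : ∫⁻ ω, ∑' q, ENNReal.ofReal (d q * t q ω) ∂μ
      = ∑' q, ∫⁻ ω, ENNReal.ofReal (d q * t q ω) ∂μ :=
    lintegral_tsum fun q => (((measurable_quad_pow X hXmeas q v).const_mul
      (d q)).ennreal_ofReal).aemeasurable
  have hterm_int : ∀ q, Integrable (fun ω => d q * t q ω) μ := fun q =>
    (integrable_quad (fun ω => (X ω) ^ q) (hXint q) v).const_mul (d q)
  have hterm_lint : ∀ q, ∫⁻ ω, ENNReal.ofReal (d q * t q ω) ∂μ
      = ENNReal.ofReal (∫ ω, d q * t q ω ∂μ) := fun q =>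
    (MeasureTheory.ofReal_integral_eq_lintegral_ofReal (hterm_int q)
      (Filter.Eventually.of_forall fun ω => hterm_nonneg q ω)).symm
  set w : ℕ → ℝ := fun q => d q * (((q / 2).factorial : ℝ) * R ^ q * (v ⬝ᵥ v)) with hw
  have hIbound : ∀ q, ∫ ω, d q * t q ω ∂μ ≤ w q := by
    intro q
    rw [integral_const_mul]
    rcases Nat.even_or_odd q with hq | hq
    · have hint : ∫ ω, t q ω ∂μ ≤ ((q / 2).factorial : ℝ) * R ^ q * (v ⬝ᵥ v) := by
        have hpsd := (hmom q hq).dotProduct_mulVec_nonneg v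
        rw [star_trivial, Matrix.sub_mulVec, dotProduct_sub, Matrix.smul_mulVec,
          Matrix.one_mulVec, dotProduct_smul, smul_eq_mul] at hpsd
        have hq2 : v ⬝ᵥ ((Matrix.of fun a b => ∫ ω, ((X ω) ^ q) a b ∂μ) *ᵥ v)
            = ∫ ω, t q ω ∂μ := integral_quad _ (hXint q) v
        rw [hq2] at hpsd
        linarith
      exact mul_le_mul_of_nonneg_left hint (hdeven q hq)
    · simp only [hdodd q hq, zero_mul, hw]
      exact le_rfl
  have hsum_bound : ∑' q, ENNReal.ofReal (w q) ≤ ENNReal.ofReal (2 * ((v ⬝ᵥ v) * e)) := by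
    have hodd : ∀ k, ENNReal.ofReal (w (2 * k + 1)) = 0 := by
      intro k
      simp only [hw, hdodd _ (odd_two_mul_add_one k), zero_mul, ENNReal.ofReal_zero]
    have heven : ∀ k : ℕ, ENNReal.ofReal (w (2 * k))
        ≤ ENNReal.ofReal ((2 * (v ⬝ᵥ v)) * ((2 * θ ^ 2 * R ^ 2) ^ k / (k.factorial : ℝ))) := by
      intro k
      apply ENNReal.ofReal_le_ofReal
      have hdiv : (2 * k) / 2 = k := by omega
      have hwk : w (2 * k) = 2 * (v ⬝ᵥ v)
          * ((1 / (((2 * k).factorial : ℝ))) * (2 * θ) ^ (2 * k)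
            * ((k.factorial : ℝ) * R ^ (2 * k))) := by
        simp only [hw, hd, hdiv, (even_two_mul k).neg_pow, hc]
        ring
      rw [hwk]
      exact mul_le_mul_of_nonneg_left (term_bound k) (by positivity)
    calc ∑' q, ENNReal.ofReal (w q)
        = (∑' k, ENNReal.ofReal (w (2 * k))) + ∑' k, ENNReal.ofReal (w (2 * k + 1)) :=
          (tsum_even_add_odd ENNReal.summable ENNReal.summable).symm
      _ = ∑' k, ENNReal.ofReal (w (2 * k)) := by simp [hodd]
      _ ≤ ∑' k, ENNReal.ofReal ((2 * (v ⬝ᵥ v)) * ((2 * θ ^ 2 * R ^ 2) ^ k / (k.factorial : ℝ))) :=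
          ENNReal.tsum_le_tsum heven
      _ = ENNReal.ofReal (∑' k : ℕ, (2 * (v ⬝ᵥ v)) * ((2 * θ ^ 2 * R ^ 2) ^ k / (k.factorial : ℝ))) :=
          (ENNReal.ofReal_tsum_of_nonneg (fun k => by positivity)
            ((Real.summable_pow_div_factorial _).mul_left _)).symm
      _ = ENNReal.ofReal (2 * ((v ⬝ᵥ v) * e)) := by
          rw [tsum_mul_left, exp_tsum, he]
          ring_nf
  -- final assembly
  calc ∫⁻ ω, ENNReal.ofReal (F ω) ∂μ
      = 2⁻¹ * ∑' q, ENNReal.ofReal (∫ ω, d q * t q ω ∂μ) := by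
        rw [hhalf, hLsum, hswap]
        congr 1
        exact tsum_congr hterm_lint
    _ ≤ 2⁻¹ * ∑' q, ENNReal.ofReal (w q) := by
        refine mul_le_mul_right (ENNReal.tsum_le_tsum fun q => ?_) _
        exact ENNReal.ofReal_le_ofReal (hIbound q)
    _ ≤ 2⁻¹ * ENNReal.ofReal (2 * ((v ⬝ᵥ v) * e)) := mul_le_mul_right hsum_bound _
    _ = ENNReal.ofReal (e * (v ⬝ᵥ v)) := by
        rw [ENNReal.ofReal_mul (by norm_num : (0:ℝ) ≤ 2)]
        rw [show ENNReal.ofReal (2:ℝ) = 2 by norm_num]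
        rw [← mul_assoc, ENNReal.inv_mul_cancel two_ne_zero ENNReal.ofNat_ne_top, one_mul]
        rw [mul_comm]
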